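/- Let ξ ∈ W^{2,∞}(O;ℝ²) be divergence-free and f ∈ W^{2,2}(O;ℝ²). Define B f := L_ξ f + T_ξ f where L_ξ f = Σ_j ξ^j ∂_j f and (T_ξ f) := Σ_j f^j ∇ξ^j. Then curl(B f) = L_ξ(curl f) in L²(O;ℝ), i.e. the SALT operator acts on vorticity as pure transport. -/

import Mathlib

open MeasureTheory

noncomputable section

abbrev E2 : Type := EuclideanSpace ℝ (Fin 2)

/-- The `j`-th partial derivative of a vector field. -/
def pd (j : Fin 2) (f : E2 → E2) (x : E2) : E2 :=
  fderiv ℝ f x (EuclideanSpace.single j 1)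

/-- The transport term `L_ξ f = Σ_j ξ^j ∂_j f`. -/
def Ladv (ξ f : E2 → E2) (x : E2) : E2 :=
  ∑ j : Fin 2, (ξ x j) • pd j f x

/-- The transport operator on scalar fields: `L_ξ h = Σ_j ξ^j ∂_j h`. -/
def LadvS (ξ : E2 → E2) (h : E2 → ℝ) (x : E2) : ℝ :=
  ∑ j : Fin 2, (ξ x j) * fderiv ℝ h x (EuclideanSpace.single j 1)

/-- The stretching term `T_ξ f = Σ_j f^j ∇ξ^j`. -/
def Tstr (ξ f : E2 → E2) (x : E2) : E2 :=
  ∑ j : Fin 2, (f x j) • gradient (fun y => ξ y j) x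

/-- The SALT operator `B f = L_ξ f + T_ξ f`. -/
def Bop (ξ f : E2 → E2) (x : E2) : E2 := Ladv ξ f x + Tstr ξ f x

/-- The scalar curl of a 2D vector field. -/
def curl2 (f : E2 → E2) (x : E2) : ℝ :=
  (pd 0 f x) 1 - (pd 1 f x) 0

lemma pd_comp {g : E2 → E2} {x : E2} {D : Fin 2 → (E2 →L[ℝ] ℝ)}
    (hg : ∀ i, HasFDerivAt (fun y => g y i) (D i) x) (k i : Fin 2) :
    pd k g x i = D i (EuclideanSpace.single k 1) := by
  have hpi : HasFDerivAt (fun y => (fun i => g y i : Fin 2 → ℝ)) (ContinuousLinearMap.pi D) x :=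
    hasFDerivAt_pi.2 hg
  have hg' : HasFDerivAt g
      (((PiLp.continuousLinearEquiv 2 ℝ (fun _ : Fin 2 => ℝ)).symm : (Fin 2 → ℝ) →L[ℝ] E2).comp
        (ContinuousLinearMap.pi D)) x :=
    ((PiLp.continuousLinearEquiv 2 ℝ (fun _ : Fin 2 => ℝ)).symm.toContinuousLinearMap.hasFDerivAt).comp x hpi
  rw [pd, hg'.fderiv]; rfl

lemma pd_apply {g : E2 → E2} {x : E2} (hg : DifferentiableAt ℝ g x) (k i : Fin 2) :
    pd k g x i = fderiv ℝ (fun y => g y i) x (EuclideanSpace.single k 1) := by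
  have h : ∀ i : Fin 2, HasFDerivAt (fun y => g y i)
      ((EuclideanSpace.proj (𝕜 := ℝ) i).comp (fderiv ℝ g x)) x := fun i =>
    ((EuclideanSpace.proj (𝕜 := ℝ) i).hasFDerivAt).comp x hg.hasFDerivAt
  rw [pd_comp h k i, ((h i).fderiv)]

lemma gradient_apply (h : E2 → ℝ) (y : E2) (i : Fin 2) :
    gradient h y i = fderiv ℝ h y (EuclideanSpace.single i 1) := by
  have : fderiv ℝ h y (EuclideanSpace.single i 1)
      = inner ℝ (gradient h y) (EuclideanSpace.single i (1:ℝ)) := by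
    rw [gradient, ← InnerProductSpace.toDual_symm_apply]
  rw [this, real_inner_comm, EuclideanSpace.inner_single_left]; simp

lemma snd_diff {h : E2 → ℝ} {x : E2} (hh : ContDiffAt ℝ 2 h x) (v : E2) :
    DifferentiableAt ℝ (fun y => fderiv ℝ h y v) x := by
  have hd : ContDiffAt ℝ 1 (fderiv ℝ h) x := hh.fderiv_right (by norm_num)
  exact ((ContinuousLinearMap.apply ℝ ℝ v).differentiableAt).comp x (hd.differentiableAt one_ne_zero)

lemma snd_symm {h : E2 → ℝ} {x : E2} (hh : ContDiffAt ℝ 2 h x) (v w : E2) :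
    fderiv ℝ (fun y => fderiv ℝ h y v) x w = fderiv ℝ (fun y => fderiv ℝ h y w) x v := by
  have hd : ContDiffAt ℝ 1 (fderiv ℝ h) x := hh.fderiv_right (by norm_num)
  have hD := hd.differentiableAt one_ne_zero
  have key : ∀ u : E2, fderiv ℝ (fun y => fderiv ℝ h y u) x
      = (ContinuousLinearMap.apply ℝ ℝ u).comp (fderiv ℝ (fderiv ℝ h) x) := fun u =>
    (((ContinuousLinearMap.apply ℝ ℝ u).hasFDerivAt).comp x hD.hasFDerivAt).fderiv
  rw [key v, key w]
  simpa using hh.isSymmSndFDerivAt (by norm_num) w v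

/-- Scalar expression for the `i`-th component of `Bop ξ f`. -/
def Pfun (ξ f : E2 → E2) (i : Fin 2) : E2 → ℝ := fun y =>
  ξ y 0 * fderiv ℝ (fun z => f z i) y (EuclideanSpace.single 0 1)
  + ξ y 1 * fderiv ℝ (fun z => f z i) y (EuclideanSpace.single 1 1)
  + f y 0 * fderiv ℝ (fun z => ξ z 0) y (EuclideanSpace.single i 1)
  + f y 1 * fderiv ℝ (fun z => ξ z 1) y (EuclideanSpace.single i 1)

section Pf
variable {ξ f : E2 → E2} {x : E2}

lemma comp_contDiffAt (hfx : ContDiffAt ℝ 2 f x) (i : Fin 2) : ContDiffAt ℝ 2 (fun y => f y i) x :=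
  (EuclideanSpace.proj (𝕜 := ℝ) i).contDiff.contDiffAt.comp x hfx

lemma Pfun_hasFDerivAt (hξ : ContDiff ℝ 2 ξ) (hfx : ContDiffAt ℝ 2 f x) (i : Fin 2) :
    HasFDerivAt (Pfun ξ f i)
      ((ξ x 0 • fderiv ℝ (fun y => fderiv ℝ (fun z => f z i) y (EuclideanSpace.single 0 1)) x
        + fderiv ℝ (fun z => f z i) x (EuclideanSpace.single 0 1) • fderiv ℝ (fun y => ξ y 0) x)
       + (ξ x 1 • fderiv ℝ (fun y => fderiv ℝ (fun z => f z i) y (EuclideanSpace.single 1 1)) x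
        + fderiv ℝ (fun z => f z i) x (EuclideanSpace.single 1 1) • fderiv ℝ (fun y => ξ y 1) x)
       + (f x 0 • fderiv ℝ (fun y => fderiv ℝ (fun z => ξ z 0) y (EuclideanSpace.single i 1)) x
        + fderiv ℝ (fun z => ξ z 0) x (EuclideanSpace.single i 1) • fderiv ℝ (fun y => f y 0) x)
       + (f x 1 • fderiv ℝ (fun y => fderiv ℝ (fun z => ξ z 1) y (EuclideanSpace.single i 1)) x
        + fderiv ℝ (fun z => ξ z 1) x (EuclideanSpace.single i 1) • fderiv ℝ (fun y => f y 1) x)) x := by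
  have hξc : ∀ j : Fin 2, ContDiffAt ℝ 2 (fun y => ξ y j) x := fun j =>
    ((EuclideanSpace.proj (𝕜 := ℝ) j).contDiff.comp hξ).contDiffAt
  have hfc := comp_contDiffAt hfx
  have dξ : ∀ j : Fin 2, HasFDerivAt (fun y => ξ y j) (fderiv ℝ (fun y => ξ y j) x) x := fun j =>
    (((hξc j).differentiableAt (by norm_num))).hasFDerivAt
  have df : ∀ j : Fin 2, HasFDerivAt (fun y => f y j) (fderiv ℝ (fun y => f y j) x) x := fun j =>
    ((hfc j).differentiableAt (by norm_num)).hasFDerivAt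
  have dDf : ∀ (j : Fin 2),
      HasFDerivAt (fun y => fderiv ℝ (fun z => f z i) y (EuclideanSpace.single j 1))
        (fderiv ℝ (fun y => fderiv ℝ (fun z => f z i) y (EuclideanSpace.single j 1)) x) x := fun j =>
    (snd_diff (hfc i) _).hasFDerivAt
  have dDξ : ∀ (j : Fin 2),
      HasFDerivAt (fun y => fderiv ℝ (fun z => ξ z j) y (EuclideanSpace.single i 1))
        (fderiv ℝ (fun y => fderiv ℝ (fun z => ξ z j) y (EuclideanSpace.single i 1)) x) x := fun j =>
    (snd_diff (hξc j) _).hasFDerivAt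
  exact ((((dξ 0).mul (dDf 0)).add ((dξ 1).mul (dDf 1))).add ((df 0).mul (dDξ 0))).add
    ((df 1).mul (dDξ 1))
end Pf

/-- The SALT operator acts on vorticity as pure transport:
`curl (B f) = L_ξ (curl f)` for divergence-free `ξ ∈ W^{2,∞}` and `f ∈ W^{2,2}`. -/
theorem stmt11 (O : Set E2) (hO : IsOpen O) (hOb : Bornology.IsBounded O)
    (ξ f : E2 → E2)
    (hξ : ContDiff ℝ 2 ξ)
    (hξbdd : ∃ K : ℝ, ∀ i : ℕ, i ≤ 2 → ∀ x, ‖iteratedFDeriv ℝ i ξ x‖ ≤ K)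
    (hdivξ : ∀ x ∈ O, ∑ j : Fin 2, pd j ξ x j = 0)
    (hf : ContDiffOn ℝ 2 f O)
    (hf2 : ∀ i : ℕ, i ≤ 2 → IntegrableOn (fun x => ‖iteratedFDeriv ℝ i f x‖ ^ 2) O) :
    ∀ x ∈ O, curl2 (Bop ξ f) x = LadvS ξ (curl2 f) x := by
  intro x hx
  have hOx : O ∈ nhds x := hO.mem_nhds hx
  have hfx : ContDiffAt ℝ 2 f x := hf.contDiffAt hOx
  have hfc := comp_contDiffAt hfx
  have hξc : ∀ j : Fin 2, ContDiffAt ℝ 2 (fun y => ξ y j) x := fun j =>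
    ((EuclideanSpace.proj (𝕜 := ℝ) j).contDiff.comp hξ).contDiffAt
  -- eventual equality of components of Bop with Pfun
  have heq : ∀ i : Fin 2, (fun y => Bop ξ f y i) =ᶠ[nhds x] Pfun ξ f i := by
    intro i
    filter_upwards [hOx] with y hy
    have hdfy : DifferentiableAt ℝ f y :=
      (hf.contDiffAt (hO.mem_nhds hy)).differentiableAt (by norm_num)
    show Bop ξ f y i = Pfun ξ f i y
    simp only [Bop, Ladv, Tstr, Pfun, Fin.sum_univ_two, PiLp.add_apply, PiLp.smul_apply,
      smul_eq_mul]
    rw [pd_apply hdfy, pd_apply hdfy, gradient_apply, gradient_apply]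
    ring
  have hB : ∀ i, HasFDerivAt (fun y => Bop ξ f y i) (fderiv ℝ (Pfun ξ f i) x) x := fun i =>
    (((Pfun_hasFDerivAt hξ hfx i).differentiableAt).hasFDerivAt).congr_of_eventuallyEq (heq i)
  have hpdB : ∀ k i : Fin 2,
      pd k (Bop ξ f) x i = fderiv ℝ (Pfun ξ f i) x (EuclideanSpace.single k 1) := fun k i =>
    pd_comp hB k i
  -- curl of f as a scalar function
  have hcurl : curl2 f =ᶠ[nhds x] (fun y =>
      fderiv ℝ (fun z => f z 1) y (EuclideanSpace.single 0 1)
      - fderiv ℝ (fun z => f z 0) y (EuclideanSpace.single 1 1)) := by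
    filter_upwards [hOx] with y hy
    have hdfy : DifferentiableAt ℝ f y :=
      (hf.contDiffAt (hO.mem_nhds hy)).differentiableAt (by norm_num)
    show curl2 f y = _
    rw [curl2, pd_apply hdfy, pd_apply hdfy]
  have hC : HasFDerivAt (curl2 f)
      (fderiv ℝ (fun y => fderiv ℝ (fun z => f z 1) y (EuclideanSpace.single 0 1)) x
       - fderiv ℝ (fun y => fderiv ℝ (fun z => f z 0) y (EuclideanSpace.single 1 1)) x) x :=
    ((((snd_diff (hfc 1) _).hasFDerivAt).sub
      ((snd_diff (hfc 0) _).hasFDerivAt))).congr_of_eventuallyEq hcurl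
  -- divergence-free condition in components
  have hdiv : fderiv ℝ (fun y => ξ y 0) x (EuclideanSpace.single 0 1)
      + fderiv ℝ (fun y => ξ y 1) x (EuclideanSpace.single 1 1) = 0 := by
    have h := hdivξ x hx
    have hdξx : DifferentiableAt ℝ ξ x := hξ.differentiable (by norm_num) x
    rw [Fin.sum_univ_two, pd_apply hdξx, pd_apply hdξx] at h
    exact h
  -- symmetry of second derivatives
  have s1 := snd_symm (hfc 1) (EuclideanSpace.single 1 1) (EuclideanSpace.single 0 1)
  have s2 := snd_symm (hfc 0) (EuclideanSpace.single 0 1) (EuclideanSpace.single 1 1)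
  have s3 := snd_symm (hξc 0) (EuclideanSpace.single 1 1) (EuclideanSpace.single 0 1)
  have s4 := snd_symm (hξc 1) (EuclideanSpace.single 1 1) (EuclideanSpace.single 0 1)
  -- put everything together
  rw [curl2, hpdB 0 1, hpdB 1 0, LadvS, Fin.sum_univ_two, hC.fderiv,
    (Pfun_hasFDerivAt hξ hfx 1).fderiv, (Pfun_hasFDerivAt hξ hfx 0).fderiv]
  simp only [ContinuousLinearMap.add_apply, ContinuousLinearMap.coe_smul', Pi.smul_apply,
    smul_eq_mul, ContinuousLinearMap.sub_apply, ContinuousLinearMap.coe_sub', Pi.sub_apply]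
  linear_combination ξ x 1 * s1 - ξ x 0 * s2 + f x 0 * s3 + f x 1 * s4 +
    (fderiv ℝ (fun y => f y 1) x (EuclideanSpace.single 0 1)
      - fderiv ℝ (fun y => f y 0) x (EuclideanSpace.single 1 1)) * hdiv
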